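/- For y ∈ [0,1], lim_{x↓z_ℓ} L_y(x) = KB_ℓ(y), where L_y(x) = Σ_{t≥0} Σ_{ω∈Ωᵗ} δ_ω(y,t)·1_{[0,T_ω(y))}(x) and KB_ℓ(y) = Σ_{t≥0} Σ_{ω∈Ωᵗ} δ_ω(y,t)·1_{B_ℓ}(T_ω(y)) with B_ℓ = I_{ℓ+1} ∪ ... ∪ I_N, assuming z_ℓ ∈ I_ℓ. -/

import Mathlib

open Set

noncomputable section

/-- `T_ω = T_{ω_t} ∘ ⋯ ∘ T_{ω_1}` (head of the list applied first). -/
def rwordApply (T : ℕ → ℝ → ℝ) : List ℕ → ℝ → ℝ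
  | [], y => y
  | j :: ω, y => rwordApply T ω (T j y)

/-- the weighted slope product `δ_ω(y,|ω|)`; `ι x` is the index of the
partition interval containing `x`. -/
def rdelta (p : ℕ → ℝ) (k : ℕ → ℕ → ℝ) (ι : ℝ → ℕ) (T : ℕ → ℝ → ℝ) :
    List ℕ → ℝ → ℝ
  | [], _ => 1
  | j :: ω, y => p j / k (ι y) j * rdelta p k ι T ω (T j y)

/-- the random piecewise linear map with slopes `k`, intercepts `d`. -/
def Tpl (k d : ℕ → ℕ → ℝ) (ι : ℝ → ℕ) (j : ℕ) (x : ℝ) : ℝ :=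
  k (ι x) j * x + d (ι x) j

/-- finite words with letters in `Ωs`. -/
def Words (Ωs : Set ℕ) : Type := {ω : List ℕ // ∀ j ∈ ω, j ∈ Ωs}

/-- `KI_n(y) = Σ_{t≥1} Σ_{ω ∈ Ωᵗ} δ_ω(y,t)·1_{I_n}(T_{ω₁^{t-1}}(y))`. -/
def KI (Ωs : Set ℕ) (p : ℕ → ℝ) (k : ℕ → ℕ → ℝ) (ι : ℝ → ℕ) (T : ℕ → ℝ → ℝ)
    (n : ℕ) (y : ℝ) : ℝ :=
  ∑' ω : {ω : List ℕ // (∀ j ∈ ω, j ∈ Ωs) ∧ ω ≠ []},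
    if ι (rwordApply T ω.1.dropLast y) = n then rdelta p k ι T ω.1 y else 0

/-- `KA_i(y) = Σ_{t≥0} Σ_{ω ∈ Ωᵗ} δ_ω(y,t)·1_{I_1 ∪ ⋯ ∪ I_i}(T_ω(y))`. -/
def KA (Ωs : Set ℕ) (p : ℕ → ℝ) (k : ℕ → ℕ → ℝ) (ι : ℝ → ℕ) (T : ℕ → ℝ → ℝ)
    (i : ℕ) (y : ℝ) : ℝ :=
  ∑' ω : Words Ωs,
    if ι (rwordApply T ω.1 y) ≤ i then rdelta p k ι T ω.1 y else 0

/-- `KB_i(y) = Σ_{t≥0} Σ_{ω ∈ Ωᵗ} δ_ω(y,t)·1_{I_{i+1} ∪ ⋯ ∪ I_N}(T_ω(y))`. -/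
def KB (Ωs : Set ℕ) (p : ℕ → ℝ) (k : ℕ → ℕ → ℝ) (ι : ℝ → ℕ) (T : ℕ → ℝ → ℝ)
    (i : ℕ) (y : ℝ) : ℝ :=
  ∑' ω : Words Ωs,
    if i < ι (rwordApply T ω.1 y) then rdelta p k ι T ω.1 y else 0

/-- `S_n = Σ_{j∈Ω} p_j / k_{n,j}`, the average inverse slope on `I_n`. -/
def Sav (Ωs : Set ℕ) (p : ℕ → ℝ) (k : ℕ → ℕ → ℝ) (n : ℕ) : ℝ :=
  ∑' j : Ωs, p j.1 / k n j.1

/-- `a_{i,j} = k_{i,j} z_i + d_{i,j}`, the left limit of `T_j` at `z_i`. -/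
def aPt (k d : ℕ → ℕ → ℝ) (z : ℕ → ℝ) (i j : ℕ) : ℝ := k i j * z i + d i j

/-- `b_{i,j} = k_{i+1,j} z_i + d_{i+1,j}`, the right limit of `T_j` at `z_i`. -/
def bPt (k d : ℕ → ℕ → ℝ) (z : ℕ → ℝ) (i j : ℕ) : ℝ := k (i + 1) j * z i + d (i + 1) j

/-- the entries `μ_{n,i}` of the fundamental matrix (Definition 3.2). -/
def fundM (Ωs : Set ℕ) (p : ℕ → ℝ) (k d : ℕ → ℕ → ℝ) (ι : ℝ → ℕ) (z : ℕ → ℝ)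
    (n i : ℕ) : ℝ :=
  ∑' j : Ωs,
    ((if n = i then p j.1 / k i j.1 else 0) -
      (if n = i + 1 then p j.1 / k (i + 1) j.1 else 0) +
      (p j.1 / k i j.1 * KI Ωs p k ι (Tpl k d ι) n (aPt k d z i j.1) -
        p j.1 / k (i + 1) j.1 * KI Ωs p k ι (Tpl k d ι) n (bPt k d z i j.1)))

/-- `L_y(x) = Σ_{t≥0} Σ_{ω∈Ωᵗ} δ_ω(y,t)·1_{[0,T_ω(y))}(x)`. -/
def Lfun (Ωs : Set ℕ) (p : ℕ → ℝ) (k : ℕ → ℕ → ℝ) (ι : ℝ → ℕ) (T : ℕ → ℝ → ℝ)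
    (y x : ℝ) : ℝ :=
  ∑' ω : Words Ωs,
    if x ∈ Ico (0:ℝ) (rwordApply T ω.1 y) then rdelta p k ι T ω.1 y else 0

/-- `h_γ(x) = Σ_{m=1}^{N−1} γ_m Σ_{ℓ∈Ω} [(p_ℓ/k_{m,ℓ}) L_{a_{m,ℓ}}(x) −
(p_ℓ/k_{m+1,ℓ}) L_{b_{m,ℓ}}(x)]`. -/
def hFun (Ωs : Set ℕ) (N : ℕ) (p : ℕ → ℝ) (k d : ℕ → ℕ → ℝ) (ι : ℝ → ℕ) (z : ℕ → ℝ)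
    (γ : ℕ → ℝ) (x : ℝ) : ℝ :=
  ∑ m ∈ Finset.Icc 1 (N - 1), γ m *
    ∑' j : Ωs,
      (p j.1 / k m j.1 * Lfun Ωs p k ι (Tpl k d ι) (aPt k d z m j.1) x -
        p j.1 / k (m + 1) j.1 * Lfun Ωs p k ι (Tpl k d ι) (bPt k d z m j.1) x)

open scoped Classical in
/-- indicator-of-membership version of `|rdelta|`, on plain lists. -/
def Fd (Ωs : Set ℕ) (p : ℕ → ℝ) (k : ℕ → ℕ → ℝ) (ι : ℝ → ℕ) (T : ℕ → ℝ → ℝ)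
    (y : ℝ) (ω : List ℕ) : ℝ :=
  if ∀ j ∈ ω, j ∈ Ωs then |rdelta p k ι T ω y| else 0

lemma Fd_nonneg (Ωs : Set ℕ) (p : ℕ → ℝ) (k : ℕ → ℕ → ℝ) (ι : ℝ → ℕ)
    (T : ℕ → ℝ → ℝ) (y : ℝ) (ω : List ℕ) : 0 ≤ Fd Ωs p k ι T y ω := by
  unfold Fd; split
  exacts [abs_nonneg _, le_refl 0]

lemma rword_mem_Icc (Ωs : Set ℕ) (k d : ℕ → ℕ → ℝ) (ι : ℝ → ℕ)
    (hT : ∀ j ∈ Ωs, ∀ x ∈ Icc (0:ℝ) 1, Tpl k d ι j x ∈ Icc (0:ℝ) 1) :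
    ∀ ω : List ℕ, (∀ j ∈ ω, j ∈ Ωs) → ∀ y ∈ Icc (0:ℝ) 1,
      rwordApply (Tpl k d ι) ω y ∈ Icc (0:ℝ) 1 := by
  intro ω
  induction ω with
  | nil => intro _ y hy; exact hy
  | cons j ω ih =>
      intro h y hy
      exact ih (fun i hi => h i (List.mem_cons_of_mem _ hi)) _
        (hT j (h j List.mem_cons_self) y hy)

lemma Fd_sum_le (Ωs : Set ℕ) (N : ℕ) (p : ℕ → ℝ) (ρ : ℝ) (hρ0 : 0 < ρ)
    (hp : ∀ j ∈ Ωs, 0 < p j)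
    (k d : ℕ → ℕ → ℝ) (ι : ℝ → ℕ)
    (hι : ∀ x ∈ Icc (0:ℝ) 1, ι x ∈ Finset.Icc 1 N)
    (hT : ∀ j ∈ Ωs, ∀ x ∈ Icc (0:ℝ) 1, Tpl k d ι j x ∈ Icc (0:ℝ) 1)
    (hA2 : ∀ n ∈ Finset.Icc 1 N,
      Summable (fun j : Ωs => p j.1 / |k n j.1|) ∧
        ∑' j : Ωs, p j.1 / |k n j.1| ≤ ρ) :
    ∀ t : ℕ, ∀ y ∈ Icc (0:ℝ) 1, ∀ s : Finset (List ℕ),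
      (∀ ω ∈ s, ω.length = t) →
      ∑ ω ∈ s, Fd Ωs p k ι (Tpl k d ι) y ω ≤ ρ ^ t := by
  classical
  intro t
  induction t with
  | zero =>
      intro y hy s hs
      have hsub : s ⊆ {([] : List ℕ)} := by
        intro ω hω
        simpa using List.length_eq_zero_iff.mp (hs ω hω)
      calc ∑ ω ∈ s, Fd Ωs p k ι (Tpl k d ι) y ω
          ≤ ∑ ω ∈ ({([] : List ℕ)} : Finset (List ℕ)), Fd Ωs p k ι (Tpl k d ι) y ω :=
            Finset.sum_le_sum_of_subset_of_nonneg hsub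
              (fun ω _ _ => Fd_nonneg _ _ _ _ _ _ _)
        _ ≤ 1 := by simp [Fd, rdelta]
        _ = ρ ^ 0 := by norm_num
  | succ t ih =>
      intro y hy s hs
      set T := Tpl k d ι with hTdef
      -- map each word to (head, tail)
      have hne : ∀ ω ∈ s, ω ≠ [] := by
        intro ω hω h
        have := hs ω hω
        rw [h] at this
        simp at this
      set s' : Finset (ℕ × List ℕ) := s.image (fun l => (l.headI, l.tail)) with hs'
      have hinj : Set.InjOn (fun l : List ℕ => (l.headI, l.tail)) s := by
        intro a ha b hb hab
        have ha' : a ≠ [] := hne a ha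
        have hb' : b ≠ [] := hne b hb
        have h1 : a.headI = b.headI := congrArg Prod.fst hab
        have h2 : a.tail = b.tail := congrArg Prod.snd hab
        calc a = a.headI :: a.tail := by
                cases a with
                | nil => exact absurd rfl ha'
                | cons x l => rfl
          _ = b.headI :: b.tail := by rw [h1, h2]
          _ = b := by
                cases b with
                | nil => exact absurd rfl hb'
                | cons x l => rfl
      have hsum_eq : ∑ ω ∈ s, Fd Ωs p k ι T y ω
          = ∑ q ∈ s', Fd Ωs p k ι T y (q.1 :: q.2) := by
        rw [hs', Finset.sum_image (fun a ha b hb hab => hinj ha hb hab)]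
        apply Finset.sum_congr rfl
        intro ω hω
        congr 1
        cases ω with
        | nil => exact absurd rfl (hne _ hω)
        | cons x l => rfl
      set J : Finset ℕ := s'.image Prod.fst with hJ
      set Ts : Finset (List ℕ) := s'.image Prod.snd with hTs
      have hsub : s' ⊆ J ×ˢ Ts := by
        intro q hq
        exact Finset.mem_product.mpr
          ⟨Finset.mem_image_of_mem _ hq, Finset.mem_image_of_mem _ hq⟩
      have hTs_len : ∀ ω' ∈ Ts, ω'.length = t := by
        intro ω' hω'
        rcases Finset.mem_image.mp hω' with ⟨q, hq, rfl⟩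
        rcases Finset.mem_image.mp hq with ⟨l, hl, rfl⟩
        have := hs l hl
        rw [List.length_tail, this]
        omega
      -- factor each term
      have hfac : ∀ (j : ℕ) (ω' : List ℕ),
          Fd Ωs p k ι T y (j :: ω')
            = (if j ∈ Ωs then |p j / k (ι y) j| else 0) * Fd Ωs p k ι T (T j y) ω' := by
        intro j ω'
        by_cases hj : j ∈ Ωs
        · by_cases hω' : ∀ i ∈ ω', i ∈ Ωs
          · have hcond : ∀ i ∈ (j :: ω'), i ∈ Ωs := by
              intro i hi
              rcases List.mem_cons.mp hi with h | h
              · exact h ▸ hj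
              · exact hω' i h
            simp only [Fd, if_pos hcond, if_pos hj, if_pos hω', rdelta, abs_mul]
          · have hcond : ¬ ∀ i ∈ (j :: ω'), i ∈ Ωs := by
              intro h
              exact hω' (fun i hi => h i (List.mem_cons_of_mem _ hi))
            simp only [Fd, if_neg hcond, if_pos hj, if_neg hω', mul_zero]
        · have hcond : ¬ ∀ i ∈ (j :: ω'), i ∈ Ωs := by
            intro h
            exact hj (h j List.mem_cons_self)
          simp only [Fd, if_neg hcond, if_neg hj, zero_mul]
      have hn : ι y ∈ Finset.Icc 1 N := hι y hy
      obtain ⟨hsumm, hρle⟩ := hA2 (ι y) hn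
      -- bound the inner sums
      have hinner : ∀ j ∈ Ωs, ∑ ω' ∈ Ts, Fd Ωs p k ι T (T j y) ω' ≤ ρ ^ t :=
        fun j hj => ih (T j y) (hT j hj y hy) Ts hTs_len
      have hinner0 : ∀ j : ℕ, 0 ≤ ∑ ω' ∈ Ts, Fd Ωs p k ι T (T j y) ω' :=
        fun j => Finset.sum_nonneg fun ω' _ => Fd_nonneg _ _ _ _ _ _ _
      calc ∑ ω ∈ s, Fd Ωs p k ι T y ω
          = ∑ q ∈ s', Fd Ωs p k ι T y (q.1 :: q.2) := hsum_eq
        _ ≤ ∑ q ∈ J ×ˢ Ts, Fd Ωs p k ι T y (q.1 :: q.2) :=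
            Finset.sum_le_sum_of_subset_of_nonneg hsub
              (fun q _ _ => Fd_nonneg _ _ _ _ _ _ _)
        _ = ∑ j ∈ J, ∑ ω' ∈ Ts, Fd Ωs p k ι T y (j :: ω') := by rw [Finset.sum_product]
        _ = ∑ j ∈ J, (if j ∈ Ωs then |p j / k (ι y) j| else 0) *
              ∑ ω' ∈ Ts, Fd Ωs p k ι T (T j y) ω' := by
            apply Finset.sum_congr rfl
            intro j _
            rw [Finset.mul_sum]
            exact Finset.sum_congr rfl fun ω' _ => hfac j ω'
        _ ≤ ∑ j ∈ J, (if j ∈ Ωs then |p j / k (ι y) j| else 0) * ρ ^ t := by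
            apply Finset.sum_le_sum
            intro j _
            by_cases hj : j ∈ Ωs
            · simp only [if_pos hj]
              exact mul_le_mul_of_nonneg_left (hinner j hj) (abs_nonneg _)
            · simp [hj]
        _ = (∑ j ∈ J, if j ∈ Ωs then |p j / k (ι y) j| else 0) * ρ ^ t := by
            rw [Finset.sum_mul]
        _ ≤ ρ * ρ ^ t := by
            apply mul_le_mul_of_nonneg_right _ (le_of_lt (pow_pos hρ0 t))
            have habs : ∀ j ∈ Ωs, |p j / k (ι y) j| = p j / |k (ι y) j| := by
              intro j hj
              rw [abs_div, abs_of_pos (hp j hj)]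
            calc (∑ j ∈ J, if j ∈ Ωs then |p j / k (ι y) j| else 0)
                = ∑ j ∈ J, (if j ∈ Ωs then p j / |k (ι y) j| else 0) := by
                  apply Finset.sum_congr rfl
                  intro j _
                  by_cases hj : j ∈ Ωs
                  · simp [hj, habs j hj]
                  · simp [hj]
              _ = ∑ j ∈ J.filter (· ∈ Ωs), p j / |k (ι y) j| :=
                  (Finset.sum_filter _ _).symm
              _ = ∑ j ∈ J.subtype (· ∈ Ωs), p j.1 / |k (ι y) j.1| :=
                  (Finset.sum_subtype_eq_sum_filter _).symm
              _ ≤ ∑' j : Ωs, p j.1 / |k (ι y) j.1| := by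
                  apply Summable.sum_le_tsum
                  · intro j _
                    exact div_nonneg (le_of_lt (hp j.1 j.2)) (abs_nonneg _)
                  · exact hsumm
              _ ≤ ρ := hρle
        _ = ρ ^ (t + 1) := (pow_succ' ρ t).symm

lemma rdelta_abs_summable (Ωs : Set ℕ) (N : ℕ) (p : ℕ → ℝ) (ρ : ℝ)
    (hρ0 : 0 < ρ) (hρ1 : ρ < 1)
    (hp : ∀ j ∈ Ωs, 0 < p j)
    (k d : ℕ → ℕ → ℝ) (ι : ℝ → ℕ)
    (hι : ∀ x ∈ Icc (0:ℝ) 1, ι x ∈ Finset.Icc 1 N)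
    (hT : ∀ j ∈ Ωs, ∀ x ∈ Icc (0:ℝ) 1, Tpl k d ι j x ∈ Icc (0:ℝ) 1)
    (hA2 : ∀ n ∈ Finset.Icc 1 N,
      Summable (fun j : Ωs => p j.1 / |k n j.1|) ∧
        ∑' j : Ωs, p j.1 / |k n j.1| ≤ ρ)
    (y : ℝ) (hy : y ∈ Icc (0:ℝ) 1) :
    Summable (fun ω : Words Ωs => |rdelta p k ι (Tpl k d ι) ω.1 y|) := by
  classical
  apply summable_of_sum_le (c := (1 - ρ)⁻¹) (fun ω => abs_nonneg _)
  intro u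
  set v : Finset (List ℕ) := u.image (fun ω : Words Ωs => ω.1) with hv
  have hval_inj : Set.InjOn (fun ω : Words Ωs => ω.1) u := by
    intro a _ b _ hab
    exact Subtype.ext hab
  have h1 : ∑ ω ∈ u, |rdelta p k ι (Tpl k d ι) ω.1 y|
      = ∑ l ∈ v, Fd Ωs p k ι (Tpl k d ι) y l := by
    rw [hv, Finset.sum_image (fun a ha b hb hab => hval_inj ha hb hab)]
    apply Finset.sum_congr rfl
    intro ω _
    simp only [Fd, if_pos ω.2]
  rw [h1]
  set M : ℕ := v.sup List.length with hM
  have hmaps : ∀ l ∈ v, l.length ∈ Finset.range (M + 1) := by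
    intro l hl
    exact Finset.mem_range.mpr (Nat.lt_succ_of_le (Finset.le_sup hl))
  calc ∑ l ∈ v, Fd Ωs p k ι (Tpl k d ι) y l
      = ∑ t ∈ Finset.range (M + 1), ∑ l ∈ v.filter (fun l => l.length = t),
          Fd Ωs p k ι (Tpl k d ι) y l :=
        (Finset.sum_fiberwise_of_maps_to hmaps _).symm
    _ ≤ ∑ t ∈ Finset.range (M + 1), ρ ^ t := by
        apply Finset.sum_le_sum
        intro t _
        exact Fd_sum_le Ωs N p ρ hρ0 hp k d ι hι hT hA2 t y hy _
          (fun l hl => (Finset.mem_filter.mp hl).2)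
    _ ≤ ∑' t : ℕ, ρ ^ t := by
        apply Summable.sum_le_tsum
        · intro t _
          exact le_of_lt (pow_pos hρ0 t)
        · exact summable_geometric_of_lt_one (le_of_lt hρ0) hρ1
    _ = (1 - ρ)⁻¹ := tsum_geometric_of_lt_one (le_of_lt hρ0) hρ1

/-- for `y ∈ [0,1]` and `z_ℓ ∈ I_ℓ`,
`lim_{x↓z_ℓ} L_y(x) = KB_ℓ(y)`. -/
theorem stmt_13 (Ωs : Set ℕ) (N : ℕ) (hN : 2 ≤ N) (p : ℕ → ℝ) (ρ : ℝ)
    (hρ0 : 0 < ρ) (hρ1 : ρ < 1)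
    (hp : ∀ j ∈ Ωs, 0 < p j) (hpsum : HasSum (fun j : Ωs => p j.1) 1)
    (k d : ℕ → ℕ → ℝ) (ι : ℝ → ℕ) (z : ℕ → ℝ)
    (hι : ∀ x ∈ Icc (0:ℝ) 1, ι x ∈ Finset.Icc 1 N)
    (hk : ∀ n ∈ Finset.Icc 1 N, ∀ j ∈ Ωs, k n j ≠ 0)
    (hT : ∀ j ∈ Ωs, ∀ x ∈ Icc (0:ℝ) 1, Tpl k d ι j x ∈ Icc (0:ℝ) 1)
    (hA2 : ∀ n ∈ Finset.Icc 1 N,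
      Summable (fun j : Ωs => p j.1 / |k n j.1|) ∧
        ∑' j : Ωs, p j.1 / |k n j.1| ≤ ρ)
    (ℓ : ℕ) (hℓ : ℓ ∈ Finset.Icc 1 (N - 1)) (hzℓ : z ℓ ∈ Icc (0:ℝ) 1)
    -- `z_ℓ ∈ I_ℓ`, so that `B_ℓ = I_{ℓ+1} ∪ ⋯ ∪ I_N = (z_ℓ, 1]` inside `[0,1]`
    (hord : ∀ w ∈ Icc (0:ℝ) 1, (ℓ < ι w ↔ z ℓ < w))
    (y : ℝ) (hy : y ∈ Icc (0:ℝ) 1) :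
    Filter.Tendsto (fun x => Lfun Ωs p k ι (Tpl k d ι) y x)
      (nhdsWithin (z ℓ) (Ioi (z ℓ)))
      (nhds (KB Ωs p k ι (Tpl k d ι) ℓ y)) := by
  have hsummable := rdelta_abs_summable Ωs N p ρ hρ0 hρ1 hp k d ι hι hT hA2 y hy
  simp only [Lfun, KB]
  apply tendsto_tsum_of_dominated_convergence hsummable
  · intro ω
    set c := rwordApply (Tpl k d ι) ω.1 y with hc
    have hcmem : c ∈ Icc (0:ℝ) 1 := rword_mem_Icc Ωs k d ι hT ω.1 ω.2 y hy
    by_cases h : ℓ < ι c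
    · rw [if_pos h]
      have hzc : z ℓ < c := (hord c hcmem).mp h
      apply Filter.Tendsto.congr' _ tendsto_const_nhds
      filter_upwards [Ioo_mem_nhdsGT_of_mem ⟨le_refl (z ℓ), hzc⟩] with x hx
      rw [if_pos ⟨le_trans hzℓ.1 (le_of_lt hx.1), hx.2⟩]
    · rw [if_neg h]
      have hcz : c ≤ z ℓ := not_lt.mp (fun hlt => h ((hord c hcmem).mpr hlt))
      apply Filter.Tendsto.congr' _ tendsto_const_nhds
      filter_upwards [self_mem_nhdsWithin] with x hx
      rw [if_neg]
      rintro ⟨-, hx2⟩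
      exact lt_irrefl x (lt_trans (lt_of_lt_of_le hx2 hcz) hx)
  · apply Filter.Eventually.of_forall
    intro x ω
    rw [Real.norm_eq_abs]
    split_ifs
    · exact le_refl _
    · simp [abs_nonneg]

end
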